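/- In the flow network H built from a bipartite graph G = (I ∪ J, E) with source s, sink t, arcs s→i of capacity q·x(i), arcs i→j of infinite capacity for edges {i,j} ∈ E, and arcs j→t of capacity d(j): if x satisfies Σ_{i ∈ N_G(Q)} q·x(i) ≥ Σ_{j ∈ Q} d(j) for all Q ⊆ J, then every finite-capacity s-t cut (S,T) in H has capacity at least Σ_{j ∈ J} d(j). -/
import Mathlib

open Finset

/-- An s-t cut of the flow network H is encoded by the sets `A ⊆ I` and `Bs ⊆ J`
of locations and regions lying on the source side (together with `s`).
Finite capacity means no infinite arc `i → j` crosses the cut, i.e.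
every edge leaving `A` lands in `Bs`.  The capacity of the cut is
`∑_{i ∉ A} q·x(i) + ∑_{j ∈ Bs} d(j)`. -/
theorem stmt_2 {I J : Type*} [Fintype I] [DecidableEq I] [Fintype J]
    (E : I → J → Bool) (q : ℕ) (hq : 0 < q) (x : I → ℕ) (d : J → ℕ)
    (hx : ∀ Q : Finset J,
      (∑ j ∈ Q, d j) ≤ ∑ i ∈ univ.filter (fun i => ∃ j ∈ Q, E i j), q * x i)
    (A : Finset I) (Bs : Finset J)
    (hfin : ∀ i ∈ A, ∀ j : J, E i j → j ∈ Bs) :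
    (∑ j : J, d j) ≤ (∑ i ∈ Aᶜ, q * x i) + ∑ j ∈ Bs, d j := by
  classical
  have h1 := hx Bsᶜ
  have h2 : univ.filter (fun i => ∃ j ∈ Bsᶜ, E i j) ⊆ Aᶜ := by
    intro i hi
    simp only [mem_filter, mem_compl] at *
    obtain ⟨-, j, hj, hE⟩ := hi
    exact fun hA => hj (hfin i hA j hE)
  have h3 : (∑ i ∈ univ.filter (fun i => ∃ j ∈ Bsᶜ, E i j), q * x i) ≤
      ∑ i ∈ Aᶜ, q * x i :=
    Finset.sum_le_sum_of_subset h2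
  calc (∑ j : J, d j) = (∑ j ∈ Bsᶜ, d j) + ∑ j ∈ Bs, d j := by
        rw [Finset.sum_compl_add_sum]
    _ ≤ (∑ i ∈ Aᶜ, q * x i) + ∑ j ∈ Bs, d j :=
        Nat.add_le_add_right (h1.trans h3) _
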